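/- For every k ≥ 1, the length of the k-th word of the Kolakoski fan satisfies 5·(6/5)^{k-1} ≤ |w_k| ≤ 5·(9/5)^{k-1}. -/

import Mathlib

/-- Expansion step of the Kolakoski fan: the `i`-th run of `expand w` has length
equal to the `i`-th letter of `w`, the runs alternating between blocks of `1`s
and blocks of `2`s, starting with a block of `1`s. -/
def expand (w : List ℕ) : List ℕ :=
  (List.range w.length).flatMap fun i =>
    List.replicate (w.getD i 0) (if i % 2 = 0 then 1 else 2)

/-- The Kolakoski fan: `fan 0 = 122` and `fan (k+1) = expand (fan k)`
(so `fan 1 = 12211`). -/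
def fan : ℕ → List ℕ
  | 0 => [1, 2, 2]
  | k + 1 => expand (fan k)

lemma expand_nil : expand [] = [] := rfl

lemma expand_cons₂ (a b : ℕ) (t : List ℕ) :
    expand (a :: b :: t) = List.replicate a 1 ++ List.replicate b 2 ++ expand t := by
  unfold expand
  simp only [List.length_cons]
  rw [show t.length + 1 + 1 = 2 + t.length by omega, List.range_add,
    List.flatMap_append, List.flatMap_map]
  simp [List.range_succ, show (2:ℕ) + 1 = 3 by rfl, Nat.add_mod_left,
    show ∀ i, 2 + i = i + 1 + 1 from fun i => by omega]
  congr 1; funext i; rw [show i + 1 + 1 = i + 2 from rfl, Nat.add_mod_right]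

lemma expand_single (a : ℕ) : expand [a] = List.replicate a 1 := by
  simp [expand, List.range_succ]

example : fan 1 = [1,2,2,1,1] := by decide

lemma mem_expand {v : List ℕ} {x : ℕ} (hx : x ∈ expand v) : x = 1 ∨ x = 2 := by
  simp only [expand, List.mem_flatMap, List.mem_replicate] at hx
  obtain ⟨i, -, -, rfl⟩ := hx
  split <;> simp

lemma mem_fan {k : ℕ} {x : ℕ} (hx : x ∈ fan k) : x = 1 ∨ x = 2 := by
  cases k with
  | zero => simp [fan] at hx; omega
  | succ k => exact mem_expand hx

lemma sum_eq {v : List ℕ} (h : ∀ x ∈ v, x = 1 ∨ x = 2) :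
    v.sum = v.length + v.count 2 := by
  induction v with
  | nil => rfl
  | cons a t ih =>
    have ha := h a (by simp)
    have := ih (fun x hx => h x (by simp [hx]))
    rcases ha with rfl | rfl <;> simp [List.count_cons, this] <;> omega

lemma count_eq {v : List ℕ} (h : ∀ x ∈ v, x = 1 ∨ x = 2) :
    v.length = v.count 1 + v.count 2 := by
  induction v with
  | nil => rfl
  | cons a t ih =>
    have ha := h a (by simp)
    have := ih (fun x hx => h x (by simp [hx]))
    rcases ha with rfl | rfl <;> simp [List.count_cons, this] <;> omega

lemma expand_facts : ∀ v : List ℕ, (∀ x ∈ v, x = 1 ∨ x = 2) →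
    (expand v).length = v.sum ∧
    v.length / 2 ≤ (expand v).count 2 ∧
    (expand v).count 2 ≤ v.length ∧
    (v.length + 1) / 2 ≤ (expand v).count 1
  | [], _ => by simp [expand_nil]
  | [a], h => by
    have : a = 1 ∨ a = 2 := h a (by simp)
    simp [expand_single, List.count_replicate]
    omega
  | a :: b :: t, h => by
    have ha : a = 1 ∨ a = 2 := h a (by simp)
    have hb : b = 1 ∨ b = 2 := h b (by simp)
    obtain ⟨h1, h2, h3, h4⟩ := expand_facts t (fun x hx => h x (by simp [hx]))
    simp only [expand_cons₂, List.length_append, List.length_replicate,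
      List.count_append, List.count_replicate, List.sum_cons, List.length_cons]
    norm_num
    omega

lemma fan_length_succ (k : ℕ) :
    (fan (k + 1)).length = (fan k).length + (fan k).count 2 := by
  have := (expand_facts (fan k) (fun x hx => mem_fan hx)).1
  rw [show fan (k+1) = expand (fan k) from rfl, this, sum_eq (fun x hx => mem_fan hx)]

lemma fan_length_ge (k : ℕ) : 5 ≤ (fan (k + 1)).length := by
  induction k with
  | zero => decide
  | succ k ih => rw [fan_length_succ]; omega

lemma key (k : ℕ) : (fan (k + 1)).length ≤ 5 * (fan (k + 1)).count 2 ∧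
    5 * (fan (k + 1)).count 2 ≤ 4 * (fan (k + 1)).length := by
  cases k with
  | zero => decide
  | succ m =>
    obtain ⟨h1, h2, h3, h4⟩ := expand_facts (fan (m + 1)) (fun x hx => mem_fan hx)
    have hv : 5 ≤ (fan (m + 1)).length := fan_length_ge m
    have hc : (fan (m + 1 + 1)).length = (fan (m + 1 + 1)).count 1 + (fan (m + 1 + 1)).count 2 :=
      count_eq (fun x hx => mem_fan hx)
    have hsum : (fan (m + 1)).sum = (fan (m + 1)).length + (fan (m + 1)).count 2 :=
      sum_eq (fun x hx => mem_fan hx)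
    have ht : (fan (m + 1)).count 2 ≤ (fan (m + 1)).length :=
      List.count_le_length
    have he : fan (m + 1 + 1) = expand (fan (m + 1)) := rfl
    rw [← he] at h1 h2 h3 h4
    omega

lemma growth (k : ℕ) :
    6 * (fan (k + 1)).length ≤ 5 * (fan (k + 2)).length ∧
    5 * (fan (k + 2)).length ≤ 9 * (fan (k + 1)).length := by
  obtain ⟨h1, h2⟩ := key k
  rw [fan_length_succ (k + 1)]
  omega


/-- For every `k ≥ 1`, the length of the `k`-th word of the
Kolakoski fan satisfies `5·(6/5)^(k-1) ≤ |w_k| ≤ 5·(9/5)^(k-1)`. -/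
theorem fan_length_bounds (k : ℕ) (hk : 1 ≤ k) :
    (5 : ℝ) * (6 / 5) ^ (k - 1) ≤ ((fan k).length : ℝ) ∧
    ((fan k).length : ℝ) ≤ (5 : ℝ) * (9 / 5) ^ (k - 1) := by
  obtain ⟨m, rfl⟩ : ∃ m, k = m + 1 := ⟨k - 1, by omega⟩
  clear hk
  simp only [Nat.add_sub_cancel]
  induction m with
  | zero => norm_num [show (fan 1).length = 5 from by decide]
  | succ m ih =>
    obtain ⟨h1, h2⟩ := ih
    obtain ⟨g1, g2⟩ := growth m
    have g1' : (6 : ℝ) * (fan (m + 1)).length ≤ 5 * (fan (m + 1 + 1)).length := by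
      exact_mod_cast g1
    have g2' : (5 : ℝ) * (fan (m + 2)).length ≤ 9 * (fan (m + 1)).length := by
      exact_mod_cast g2
    constructor
    · rw [pow_succ]; nlinarith
    · rw [pow_succ]; nlinarith [pow_pos (show (0:ℝ) < 9/5 by norm_num) m]
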